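/- Let f be a sub-linear order (total, non-decreasing, unbounded, with f(n) = o(n)), let p_f = max{n : f(n) ≥ n}, and define f*(n) = min{k : f^{(k)}(n) ≤ p_f} (k-fold iteration). Then f* is itself a sub-linear order. -/

import Mathlib

open Set Filter

namespace KC

/-- Length of the binary string identified with the natural number `n`. -/
def len (n : ℕ) : ℕ := Nat.log 2 (n + 1)

/-- Complexity of `x` relative to machine `T`. -/
noncomputable def MachineCplx (T : ℕ →. ℕ) (x : ℕ) : ℕ := sInf {n | ∃ y, len y = n ∧ x ∈ T y}

/-- `U` is an optimal machine. -/
def Optimal (U : ℕ →. ℕ) : Prop :=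
  Partrec U ∧ ∀ T : ℕ →. ℕ, Partrec T → ∃ c, ∀ x y, x ∈ T y → MachineCplx U x ≤ len y + c

/-- Conditional complexity of `x` given `y` relative to machine `T`. -/
noncomputable def CondCplx (T : ℕ →. ℕ) (x y : ℕ) : ℕ :=
  sInf {n | ∃ z, len z = n ∧ x ∈ T (Nat.pair z y)}

/-- `U` is optimal as a conditional machine. -/
def CondOptimal (U : ℕ →. ℕ) : Prop :=
  Partrec U ∧ ∀ T : ℕ →. ℕ, Partrec T →
    ∃ c, ∀ x y z, x ∈ T (Nat.pair z y) → CondCplx U x y ≤ len z + c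

/-- `y` is a prefix of `z` (as binary strings identified with naturals). -/
def IsPrefix (y z : ℕ) : Prop := ∃ k, (y + 1) * 2 ^ k ≤ z + 1 ∧ z + 1 < (y + 2) * 2 ^ k

/-- A machine with prefix-free domain. -/
def PrefixFree (T : ℕ →. ℕ) : Prop :=
  ∀ y z, (T y).Dom → (T z).Dom → IsPrefix y z → y = z

/-- `U` is an optimal prefix-free machine. -/
def PrefixOptimal (U : ℕ →. ℕ) : Prop :=
  Partrec U ∧ PrefixFree U ∧ ∀ T : ℕ →. ℕ, Partrec T → PrefixFree T →
    ∃ c, ∀ x y, x ∈ T y → MachineCplx U x ≤ len y + c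

/-- Upper semicomputability: `A` is a pointwise limit of a computable
nonincreasing sequence of approximations. -/
def UpperSemicomputable (A : ℕ → ℕ) : Prop :=
  ∃ F : ℕ → ℕ → ℕ, Computable₂ F ∧ (∀ x, Antitone (F x)) ∧ ∀ x, A x = ⨅ s, F x s

/-- Uniform upper semicomputability for a two-argument function. -/
def UpperSemicomputable₂ (B : ℕ → ℕ → ℕ) : Prop :=
  UpperSemicomputable (fun p => B (Nat.unpair p).1 (Nat.unpair p).2)

/-- Solovay's function `α` built from a complexity function `K`. -/
noncomputable def solovay (K : ℕ → ℕ) (n : ℕ) : ℕ := sInf {m | ∃ i, n < i ∧ K i = m}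

/-- An order: total, non-decreasing, unbounded. -/
def IsOrder (h : ℕ → ℕ) : Prop := Monotone h ∧ ∀ m, ∃ n, m ≤ h n

/-- Sub-linearity: `f n = o(n)`. -/
def Sublinear (f : ℕ → ℕ) : Prop :=
  Tendsto (fun n => (f n : ℝ) / n) atTop (nhds 0)

/-- `p_f = max {n | f n ≥ n}`. -/
noncomputable def pstar (f : ℕ → ℕ) : ℕ := sSup {n | n ≤ f n}

/-- The star-operator: `f* n = min {k | f^[k] n ≤ p_f}`. -/
noncomputable def starOp (f : ℕ → ℕ) (n : ℕ) : ℕ := sInf {k | f^[k] n ≤ pstar f}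

end KC


open Set Filter KC

section Aux

variable {f : ℕ → ℕ}

/-- From sublinearity: eventually `2 * f n < n`. -/
lemma half_bound (hs : Sublinear f) : ∃ N, 1 ≤ N ∧ ∀ n, N ≤ n → 2 * f n < n := by
  have h : ∀ᶠ n : ℕ in atTop, (f n : ℝ) / n < 1/2 := by
    have := hs.eventually (eventually_lt_nhds (by norm_num : (0:ℝ) < 1/2))
    exact this
  rcases (h.and (eventually_ge_atTop 1)).exists_forall_of_atTop with ⟨N, hN⟩
  refine ⟨max N 1, le_max_right _ _, fun n hn => ?_⟩
  have hN' := hN n (le_trans (le_max_left _ _) hn)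
  have hn1 : 1 ≤ n := le_trans (le_max_right _ _) hn
  have hnpos : (0:ℝ) < n := by exact_mod_cast hn1
  have h1 : (f n : ℝ) / n < 1/2 := hN'.1
  rw [div_lt_iff₀ hnpos] at h1
  have : (2 * f n : ℝ) < n := by push_cast; linarith
  exact_mod_cast this

lemma gt_pstar_lt (hs : Sublinear f) {n : ℕ} (hn : pstar f < n) : f n < n := by
  obtain ⟨N, hN1, hN⟩ := half_bound hs
  have hbdd : BddAbove {n | n ≤ f n} := by
    refine ⟨N, fun m hm => ?_⟩
    by_contra hc
    push_neg at hc
    have := hN m hc.le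
    have : f m < m := by omega
    exact absurd hm (by simpa using this.not_ge)
  by_contra hc
  push_neg at hc
  exact absurd (le_csSup hbdd hc) hn.not_ge

lemma starOp_set_nonempty (hs : Sublinear f) (n : ℕ) :
    {k | f^[k] n ≤ pstar f}.Nonempty := by
  induction n using Nat.strong_induction_on with
  | _ n ih =>
    rcases le_or_gt n (pstar f) with h | h
    · exact ⟨0, h⟩
    · obtain ⟨k, hk⟩ := ih (f n) (gt_pstar_lt hs h)
      exact ⟨k + 1, by simpa [Function.iterate_succ_apply] using hk⟩

lemma starOp_iterate (hs : Sublinear f) (n : ℕ) :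
    f^[starOp f n] n ≤ pstar f := Nat.sInf_mem (starOp_set_nonempty hs n)

lemma starOp_mono (hf : IsOrder f) (hs : Sublinear f) : Monotone (starOp f) := by
  intro m n hmn
  have h := starOp_iterate hs n
  exact Nat.sInf_le (le_trans (hf.1.iterate _ hmn) h)

lemma starOp_succ_bound (hs : Sublinear f) (n : ℕ) :
    starOp f n ≤ starOp f (f n) + 1 := by
  apply Nat.sInf_le
  show f^[starOp f (f n) + 1] n ≤ pstar f
  rw [Function.iterate_succ_apply]
  exact starOp_iterate hs (f n)

lemma starOp_log_bound (hf : IsOrder f) (hs : Sublinear f) {N : ℕ} (hN1 : 1 ≤ N)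
    (hN : ∀ n, N ≤ n → 2 * f n < n) :
    ∀ k n, n ≤ N * 2 ^ k → starOp f n ≤ starOp f N + k := by
  intro k
  induction k with
  | zero => intro n hn; simpa using starOp_mono hf hs (by simpa using hn)
  | succ k ih =>
    intro n hn
    rcases le_or_gt n N with h | h
    · exact le_trans (starOp_mono hf hs h) (by omega)
    · have h2 := hN n h.le
      have hfn : f n ≤ N * 2 ^ k := by
        have hrw : N * 2 ^ (k + 1) = N * 2 ^ k * 2 := by ring
        rw [hrw] at hn
        omega
      have := ih (f n) hfn
      have := starOp_succ_bound hs n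
      omega

end Aux
open KC Set Filter in
private lemma starOp_unbdd_aux {f : ℕ → ℕ} (hf : IsOrder f) :
    ∀ k, ∃ n, ∀ j ≤ k, pstar f + 1 ≤ f^[j] n := by
  intro k
  induction k with
  | zero => exact ⟨pstar f + 1, fun j hj => by interval_cases j; simp⟩
  | succ k ih =>
    obtain ⟨n, hn⟩ := ih
    obtain ⟨m, hm⟩ := hf.2 n
    refine ⟨max m (pstar f + 1), fun j hj => ?_⟩
    cases j with
    | zero => simp
    | succ i =>
      rw [Function.iterate_succ_apply]
      calc pstar f + 1 ≤ f^[i] n := hn i (by omega)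
        _ ≤ f^[i] (f (max m (pstar f + 1))) :=
          hf.1.iterate i (le_trans hm (hf.1 (le_max_left _ _)))

open KC Set Filter in
private lemma tendsto_natLog_div : Tendsto (fun n : ℕ => (Nat.log 2 n : ℝ) / n) atTop (nhds 0) := by
  have hlog : Tendsto (fun x : ℝ => Real.log x / x) atTop (nhds 0) := by
    have := Real.tendsto_pow_log_div_mul_add_atTop 1 0 1 one_ne_zero
    simpa using this
  have h2 : Tendsto (fun n : ℕ => (Real.log n / n) / Real.log 2) atTop (nhds 0) := by
    simpa using (hlog.comp tendsto_natCast_atTop_atTop).div_const (Real.log 2)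
  apply tendsto_of_tendsto_of_tendsto_of_le_of_le' tendsto_const_nhds h2
  · exact Eventually.of_forall fun n => by positivity
  · filter_upwards [eventually_ge_atTop 1] with n hn
    have hpow : (2:ℕ) ^ (Nat.log 2 n) ≤ n := Nat.pow_log_le_self 2 (by omega)
    have hlog2 : (0:ℝ) < Real.log 2 := Real.log_pos (by norm_num)
    have hle : (Nat.log 2 n : ℝ) * Real.log 2 ≤ Real.log n := by
      have : Real.log ((2:ℝ) ^ (Nat.log 2 n)) ≤ Real.log n :=
        Real.log_le_log (by positivity) (by exact_mod_cast hpow)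
      simpa [Real.log_pow, mul_comm] using this
    have hnpos : (0:ℝ) < n := by exact_mod_cast hn
    rw [div_div, div_le_div_iff₀ hnpos (by positivity)]
    nlinarith [mul_le_mul_of_nonneg_right hle hnpos.le]

open KC
/-- The star-operator of a sub-linear order is again a sub-linear order. -/
theorem starOp_sublinear_order (f : ℕ → ℕ) (hf : IsOrder f) (hs : Sublinear f) :
    IsOrder (starOp f) ∧ Sublinear (starOp f) := by
  obtain ⟨N, hN1, hN⟩ := half_bound hs
  have hmono := starOp_mono hf hs
  have hunbdd : ∀ m, ∃ n, m ≤ starOp f n := by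
    intro m
    obtain ⟨n, hn⟩ := starOp_unbdd_aux hf m
    refine ⟨n, ?_⟩
    by_contra hc
    push_neg at hc
    have h1 := starOp_iterate hs n
    have h2 := hn (starOp f n) hc.le
    omega
  refine ⟨⟨hmono, hunbdd⟩, ?_⟩
  -- Sublinearity
  have hbound : ∀ n : ℕ, starOp f n ≤ starOp f N + (Nat.log 2 n + 1) := by
    intro n
    apply starOp_log_bound hf hs hN1 hN
    calc n ≤ 2 ^ (Nat.log 2 n + 1) := (Nat.lt_pow_succ_log_self one_lt_two n).le
      _ ≤ N * 2 ^ (Nat.log 2 n + 1) := Nat.le_mul_of_pos_left _ hN1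
  set C : ℕ := starOp f N + 1 with hC
  have hup : Filter.Tendsto (fun n : ℕ => (C : ℝ) / n + (Nat.log 2 n : ℝ) / n)
      Filter.atTop (nhds 0) := by
    simpa using (tendsto_const_div_atTop_nhds_zero_nat (C : ℝ)).add tendsto_natLog_div
  apply tendsto_of_tendsto_of_tendsto_of_le_of_le' tendsto_const_nhds hup
  · exact Filter.Eventually.of_forall fun n => by positivity
  · filter_upwards [Filter.eventually_ge_atTop 1] with n hn
    have hnpos : (0:ℝ) < n := by exact_mod_cast hn
    rw [← add_div]
    have hnum : starOp f n ≤ C + Nat.log 2 n := by have := hbound n; omega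
    gcongr
    exact_mod_cast hnum
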